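/- Let 𝕋 be an almost periodic time scale (Π ≠ {0}) and u ∈ U_∞^Inv. If f, g ∈ PAP(𝕋,ℝ,u), then f + g ∈ PAP(𝕋,ℝ,u) and the pointwise product f·g ∈ PAP(𝕋,ℝ,u); moreover, if f ∈ PAP(𝕋,ℝ,u) and g ∈ AP(𝕋,ℝ), then f·g ∈ PAP(𝕋,ℝ,u). -/

import Mathlib

open MeasureTheory Filter Set

noncomputable section

/-- Forward jump operator of a time scale `T`. -/
def tsSigma (T : Set ℝ) (t : ℝ) : ℝ := sInf {s | s ∈ T ∧ t < s}

/-- Graininess of a time scale. -/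
def tsGrain (T : Set ℝ) (t : ℝ) : ℝ := tsSigma T t - t

/-- The set `Π` of translation numbers of a time scale. -/
def tsPi (T : Set ℝ) : Set ℝ := {τ : ℝ | ∀ t ∈ T, t + τ ∈ T ∧ t - τ ∈ T}

/-- An almost periodic time scale: a nonempty closed subset of `ℝ` with `Π ≠ {0}`. -/
def APTimeScale (T : Set ℝ) : Prop :=
  T.Nonempty ∧ IsClosed T ∧ ∃ τ ∈ tsPi T, τ ≠ 0

/-- The Δ-measure of the time scale `T`:
Lebesgue measure restricted to `T` plus point masses `μ(t)·δ_t` at right-scattered points. -/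
def deltaMeasure (T : Set ℝ) : Measure ℝ :=
  volume.restrict T +
    Measure.sum (fun p : {t : ℝ // t ∈ T ∧ t < tsSigma T t} =>
      (ENNReal.ofReal (tsGrain T p.1)) • Measure.dirac (p.1 : ℝ))

/-- The integrand `g_a` appearing in the generalized exponential function. -/
def gExp (T : Set ℝ) (a : ℝ) (τ : ℝ) : ℝ :=
  if 0 < tsGrain T τ then Real.log (1 + tsGrain T τ * a) / tsGrain T τ else a

/-- The generalized exponential function `e_{⊖a}(t, s)` (intended for `s ≤ t`). -/
def eOminus (T : Set ℝ) (a t s : ℝ) : ℝ :=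
  Real.exp (-∫ τ in Ico s t ∩ T, gExp T a τ ∂(deltaMeasure T))

/-- `t̄ = min([0,∞) ∩ T)`. -/
def tsT0 (T : Set ℝ) : ℝ := sInf {t : ℝ | t ∈ T ∧ 0 ≤ t}

/-- `Q_r = [t̄ - r, t̄ + r] ∩ T`. -/
def Qr (T : Set ℝ) (r : ℝ) : Set ℝ := Icc (tsT0 T - r) (tsT0 T + r) ∩ T

/-- `u(Q_r) = ∫_{Q_r} u dμ_Δ`. -/
def uQ (T : Set ℝ) (u : ℝ → ℝ) (r : ℝ) : ℝ := ∫ t in Qr T r, u t ∂(deltaMeasure T)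

/-- The filter `r → ∞` along `Π`. -/
def alongPi (T : Set ℝ) : Filter ℝ := atTop ⊓ 𝓟 (tsPi T)

/-- The filter `|t| → ∞`, `t ∈ T`. -/
def absAtTopIn (T : Set ℝ) : Filter ℝ := (atTop ⊔ atBot) ⊓ 𝓟 T

/-- The class `U_∞` of admissible weights on the time scale `T`. -/
def UInfty (T : Set ℝ) (u : ℝ → ℝ) : Prop :=
  Measurable u ∧ (∀ t ∈ T, 0 < u t) ∧
  (∀ s : Set ℝ, Bornology.IsBounded s → IntegrableOn u (s ∩ T) (deltaMeasure T)) ∧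
  (∃ c > 0, ∀ t ∈ T, c ≤ u t) ∧
  Tendsto (uQ T u) (alongPi T) atTop

/-- The class `U_∞^Inv` of weights:
`limsup_{|t|→∞, t∈T} u(t+s)/u(t) < ∞` for every `s ∈ Π`. -/
def UInftyInv (T : Set ℝ) (u : ℝ → ℝ) : Prop :=
  UInfty T u ∧ ∀ s ∈ tsPi T, ∃ C : ℝ, ∀ᶠ t in absAtTopIn T, u (t + s) / u t ≤ C

variable {E : Type*} [NormedAddCommGroup E]

/-- Almost periodic functions on a time scale (Bohr-type definition via `Π`). -/
def APfun (T : Set ℝ) (f : ℝ → E) : Prop :=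
  ContinuousOn f T ∧
  ∀ ε > 0, ∃ l > 0, ∀ x : ℝ, ∃ τ ∈ tsPi T, τ ∈ Icc x (x + l) ∧
    ∀ t ∈ T, ‖f (t + τ) - f t‖ < ε

/-- Bounded continuous functions on the time scale `T`. -/
def BCfun (T : Set ℝ) (f : ℝ → E) : Prop :=
  ContinuousOn f T ∧ ∃ C : ℝ, ∀ t ∈ T, ‖f t‖ ≤ C

/-- The weighted ergodic space `PAP₀(T, E, u)`. -/
def PAP0fun (T : Set ℝ) (u : ℝ → ℝ) (f : ℝ → E) : Prop :=
  BCfun T f ∧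
  Tendsto (fun r => (uQ T u r)⁻¹ * ∫ t in Qr T r, ‖f t‖ * u t ∂(deltaMeasure T))
    (alongPi T) (nhds 0)

/-- Weighted pseudo-almost periodic functions on the time scale `T`. -/
def PAPfun (T : Set ℝ) (u : ℝ → ℝ) (f : ℝ → E) : Prop :=
  ∃ g h : ℝ → E, APfun T g ∧ PAP0fun T u h ∧ ∀ t ∈ T, f t = g t + h t

/-- `d` is the Δ-derivative of `f` at `t ∈ T`. -/
def deltaDeriv [NormedSpace ℝ E] (T : Set ℝ) (f : ℝ → E) (t : ℝ) (d : E) : Prop :=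
  ∀ ε > 0, ∃ δ > 0, ∀ s ∈ T, |s - t| < δ →
    ‖f (tsSigma T t) - f s - (tsSigma T t - s) • d‖ ≤ ε * |tsSigma T t - s|

/-- A fixed matrix norm (the ℓ¹ norm of the entries). -/
def matNorm {n : ℕ} (M : Matrix (Fin n) (Fin n) ℝ) : ℝ := ∑ i, ∑ j, |M i j|

/-- The linear system `x^Δ = A(t) x` admits an exponential dichotomy on `T`. -/
def ExpDichotomy {n : ℕ} (T : Set ℝ) (A : ℝ → Matrix (Fin n) (Fin n) ℝ) : Prop :=
  ∃ K > (0 : ℝ), ∃ α > (0 : ℝ), ∃ P : Matrix (Fin n) (Fin n) ℝ, P * P = P ∧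
    ∃ X : ℝ → Matrix (Fin n) (Fin n) ℝ,
      (∀ t ∈ T, IsUnit (X t)) ∧
      (∀ t ∈ T, ∀ i j, deltaDeriv T (fun s => X s i j) t ((A t * X t) i j)) ∧
      (∀ s ∈ T, ∀ t ∈ T, tsSigma T s ≤ t →
        matNorm (X t * P * (X (tsSigma T s))⁻¹) ≤ K * eOminus T α t (tsSigma T s)) ∧
      (∀ s ∈ T, ∀ t ∈ T, t ≤ tsSigma T s →
        matNorm (X t * (1 - P) * (X (tsSigma T s))⁻¹) ≤ K * eOminus T α (tsSigma T s) t)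

/-- `x` is a bounded continuous solution on `T` of `x^Δ(t) = A(t) x(t) + F(t)`. -/
def IsLinBddSol {n : ℕ} (T : Set ℝ) (A : ℝ → Matrix (Fin n) (Fin n) ℝ)
    (F x : ℝ → Fin n → ℝ) : Prop :=
  BCfun T x ∧ ∀ t ∈ T, deltaDeriv T x t ((A t).mulVec (x t) + F t)

/-- `x` is a (continuous, Δ-differentiable) solution of the delayed cellular neural network
on the set `S ⊆ T`. -/
def IsCNNSol {n : ℕ} (T S : Set ℝ) (c : Fin n → ℝ → ℝ) (a b : Fin n → Fin n → ℝ → ℝ)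
    (f : Fin n → ℝ → ℝ) (γ : Fin n → Fin n → ℝ) (I : Fin n → ℝ → ℝ)
    (x : ℝ → Fin n → ℝ) : Prop :=
  ContinuousOn x T ∧
  ∀ t ∈ S, ∀ i, deltaDeriv T (fun s => x s i) t
    (-(c i t) * x t i + (∑ j, a i j t * f j (x t j)) +
      (∑ j, b i j t * f j (x (t - γ i j) j)) + I i t)

section AuxPAP

open MeasureTheory Filter Set

variable {T : Set ℝ}

lemma tsPi_neg {a : ℝ} (ha : a ∈ tsPi T) : -a ∈ tsPi T := by
  intro t ht
  obtain ⟨h1, h2⟩ := ha t ht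
  constructor
  · simpa [sub_eq_add_neg] using h2
  · simpa [sub_neg_eq_add] using h1

lemma tsPi_add {a b : ℝ} (ha : a ∈ tsPi T) (hb : b ∈ tsPi T) : a + b ∈ tsPi T := by
  intro t ht
  obtain ⟨h1, h2⟩ := ha t ht
  constructor
  · have := (hb _ h1).1
    simpa [add_assoc] using this
  · have := (hb _ h2).2
    simpa [sub_add_eq_sub_sub] using this

lemma tsPi_sub {a b : ℝ} (ha : a ∈ tsPi T) (hb : b ∈ tsPi T) : a - b ∈ tsPi T := by
  simpa [sub_eq_add_neg] using tsPi_add ha (tsPi_neg hb)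

/-- An AP function is bounded on `T`. -/
lemma bc_of_ap (hTc : IsClosed T) {f : ℝ → ℝ} (hf : APfun T f) : BCfun T f := by
  refine ⟨hf.1, ?_⟩
  obtain ⟨l, hl, hap⟩ := hf.2 1 one_pos
  have hK : IsCompact (Icc (0:ℝ) l ∩ T) := isCompact_Icc.inter_right hTc
  obtain ⟨C, hC⟩ := hK.exists_bound_of_continuousOn (hf.1.mono inter_subset_right)
  refine ⟨C + 1, fun t ht => ?_⟩
  obtain ⟨τ, hτP, hτI, hτap⟩ := hap (-t)
  have htτ : t + τ ∈ T := (hτP t ht).1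
  have h1 : ‖f (t + τ) - f t‖ < 1 := hτap t ht
  have h2 : ‖f (t + τ)‖ ≤ C := hC _ ⟨⟨by linarith [hτI.1], by linarith [hτI.2]⟩, htτ⟩
  calc ‖f t‖ = ‖f (t + τ) - (f (t + τ) - f t)‖ := by ring_nf
    _ ≤ ‖f (t + τ)‖ + ‖f (t + τ) - f t‖ := norm_sub_le _ _
    _ ≤ C + 1 := by linarith

/-- An AP function is uniformly continuous on `T`. -/
lemma uc_of_ap (hTc : IsClosed T) {f : ℝ → ℝ} (hf : APfun T f) :
    ∀ ε > 0, ∃ δ > 0, ∀ t ∈ T, ∀ s ∈ T, |t - s| < δ → |f t - f s| < ε := by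
  intro ε hε
  obtain ⟨l, hl, hap⟩ := hf.2 (ε/3) (by positivity)
  have hK : IsCompact (Icc (-1:ℝ) (l+1) ∩ T) := isCompact_Icc.inter_right hTc
  have hucK : UniformContinuousOn f (Icc (-1:ℝ) (l+1) ∩ T) :=
    hK.uniformContinuousOn_of_continuous (hf.1.mono inter_subset_right)
  obtain ⟨δ, hδ, hδ'⟩ := Metric.uniformContinuousOn_iff.mp hucK (ε/3) (by positivity)
  refine ⟨min δ 1, by positivity, fun t ht s hs hts => ?_⟩
  obtain ⟨τ, hτP, hτI, hτap⟩ := hap (-t)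
  have htτ : t + τ ∈ T := (hτP t ht).1
  have hsτ : s + τ ∈ T := (hτP s hs).1
  have hts1 : |t - s| < δ := lt_of_lt_of_le hts (min_le_left _ _)
  have hts2 : |t - s| < 1 := lt_of_lt_of_le hts (min_le_right _ _)
  have habs := abs_lt.mp hts2
  have htK : t + τ ∈ Icc (-1:ℝ) (l+1) ∩ T :=
    ⟨⟨by linarith [hτI.1], by linarith [hτI.2]⟩, htτ⟩
  have hsK : s + τ ∈ Icc (-1:ℝ) (l+1) ∩ T :=
    ⟨⟨by linarith [hτI.1], by linarith [hτI.2]⟩, hsτ⟩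
  have hmid : dist (f (t + τ)) (f (s + τ)) < ε/3 := by
    apply hδ' _ htK _ hsK
    rw [Real.dist_eq]
    simpa using hts1
  rw [Real.dist_eq] at hmid
  have h1 : ‖f (t + τ) - f t‖ < ε/3 := hτap t ht
  have h2 : ‖f (s + τ) - f s‖ < ε/3 := hτap s hs
  rw [Real.norm_eq_abs] at h1 h2
  have e1 := abs_sub_abs_le_abs_sub (f t) (f s)
  calc |f t - f s| ≤ |f t - f (t + τ)| + |f (t + τ) - f s| := abs_sub_le _ _ _
    _ ≤ |f t - f (t + τ)| + (|f (t + τ) - f (s + τ)| + |f (s + τ) - f s|) := by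
        linarith [abs_sub_le (f (t + τ)) (f (s + τ)) (f s)]
    _ < ε := by rw [abs_sub_comm (f t)] ; rw [abs_sub_comm (f (s + τ))] at *; linarith

end AuxPAP
section AuxPAP2

open MeasureTheory Filter Set

variable {T : Set ℝ}

/-- Common almost periods for two AP functions. -/
lemma common_ap (hTc : IsClosed T) {f g : ℝ → ℝ} (hf : APfun T f) (hg : APfun T g) :
    ∀ ε > 0, ∃ L > 0, ∀ x : ℝ, ∃ τ ∈ tsPi T, τ ∈ Icc x (x + L) ∧
      ∀ t ∈ T, |f (t + τ) - f t| < ε ∧ |g (t + τ) - g t| < ε := by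
  intro ε hε
  obtain ⟨δ, hδ, hδ'⟩ := uc_of_ap hTc hg (ε/2) (by positivity)
  obtain ⟨l₁, hl₁, hap₁⟩ := hf.2 (ε/2) (by positivity)
  obtain ⟨l₂, hl₂, hap₂⟩ := hg.2 (ε/4) (by positivity)
  choose τ₁ hτ₁P hτ₁I hτ₁ap using hap₁
  choose τ₂ hτ₂P hτ₂I hτ₂ap using hap₂
  set l : ℝ := max l₁ l₂ with hldef
  have hlpos : 0 < l := lt_of_lt_of_le hl₁ (le_max_left _ _)
  set d : ℝ → ℝ := fun x => τ₁ x - τ₂ x with hddef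
  have hdb : ∀ x, -l ≤ d x ∧ d x ≤ l := by
    intro x
    have h1 := hτ₁I x
    have h2 := hτ₂I x
    constructor
    · have : τ₂ x ≤ x + l₂ := h2.2
      have : τ₂ x ≤ x + l := le_trans this (by simp [hldef, le_max_right])
      have h1' : x ≤ τ₁ x := h1.1
      simp only [hddef]; linarith
    · have : τ₁ x ≤ x + l₁ := h1.2
      have : τ₁ x ≤ x + l := le_trans this (by simp [hldef, le_max_left])
      have h2' : x ≤ τ₂ x := h2.1
      simp only [hddef]; linarith
  set k : ℝ → ℤ := fun x => ⌊d x / δ⌋ with hkdef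
  set a : ℤ := ⌊(-l) / δ⌋ with hadef
  set b : ℤ := ⌊l / δ⌋ with hbdef
  have hkmem : ∀ x, k x ∈ Finset.Icc a b := by
    intro x
    obtain ⟨h1, h2⟩ := hdb x
    rw [Finset.mem_Icc]
    constructor
    · exact Int.floor_mono (by gcongr)
    · exact Int.floor_mono (by gcongr)
  have hab : a ≤ b := by
    have := hkmem 0
    rw [Finset.mem_Icc] at this
    linarith [this.1, this.2]
  classical
  set w : ℤ → ℝ := fun m => if h : ∃ x, k x = m then h.choose else 0 with hwdef
  have hw : ∀ x, k (w (k x)) = k x := by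
    intro x
    have h : ∃ y, k y = k x := ⟨x, rfl⟩
    simp only [hwdef, dif_pos h]
    exact h.choose_spec
  have hne : (Finset.Icc a b).Nonempty := Finset.nonempty_Icc.mpr hab
  set M : ℝ := (Finset.Icc a b).sup' hne (fun m => |τ₁ (w m)|) with hMdef
  have hMnn : 0 ≤ M := le_trans (abs_nonneg (τ₁ (w a))) (Finset.le_sup' (fun m => |τ₁ (w m)|) (Finset.mem_Icc.mpr ⟨le_refl a, hab⟩))
  have hMb : ∀ x, |τ₁ (w (k x))| ≤ M := fun x => Finset.le_sup' (fun m => |τ₁ (w m)|) (hkmem x)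
  refine ⟨2 * M + 2 * l, by positivity, fun x => ?_⟩
  set x' : ℝ := x + M + l with hx'def
  set y : ℝ := w (k x') with hydef
  set τ : ℝ := τ₁ x' - τ₁ y with hτdef
  have hτP : τ ∈ tsPi T := tsPi_sub (hτ₁P x') (hτ₁P y)
  have hIcc : τ ∈ Icc x (x + (2 * M + 2 * l)) := by
    have h1 := hτ₁I x'
    have h2 : |τ₁ y| ≤ M := hMb x'
    have h2' := abs_le.mp h2
    have hll : l₁ ≤ l := le_max_left _ _
    constructor
    · simp only [hτdef, hx'def]; linarith [h1.1, h2'.2]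
    · simp only [hτdef, hx'def]; linarith [h1.2, h2'.1]
  -- |d x' - d y| < δ
  have hkxy : k y = k x' := hw x'
  have hfloor : ∀ z : ℝ, (k z : ℝ) * δ ≤ d z ∧ d z < (k z : ℝ) * δ + δ := by
    intro z
    have h1 : (k z : ℝ) ≤ d z / δ := Int.floor_le _
    have h2 : d z / δ < (k z : ℝ) + 1 := Int.lt_floor_add_one _
    constructor
    · calc (k z : ℝ) * δ ≤ (d z / δ) * δ := by gcongr
        _ = d z := div_mul_cancel₀ _ (ne_of_gt hδ)
    · have : d z / δ * δ < ((k z : ℝ) + 1) * δ := by gcongr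
      rw [div_mul_cancel₀ _ (ne_of_gt hδ)] at this
      linarith
  have hη : |d x' - d y| < δ := by
    obtain ⟨ha1, ha2⟩ := hfloor x'
    obtain ⟨hb1, hb2⟩ := hfloor y
    rw [hkxy] at hb1 hb2
    rw [abs_lt]; constructor <;> linarith
  refine ⟨τ, hτP, hIcc, fun t ht => ?_⟩
  constructor
  · -- f part
    have htB : t - τ₁ y ∈ T := (hτ₁P y t ht).2
    have h1 : ‖f (t - τ₁ y + τ₁ x') - f (t - τ₁ y)‖ < ε/2 := hτ₁ap x' _ htB
    have h2 : ‖f (t - τ₁ y + τ₁ y) - f (t - τ₁ y)‖ < ε/2 := hτ₁ap y _ htB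
    rw [Real.norm_eq_abs] at h1 h2
    have e1 : t - τ₁ y + τ₁ x' = t + τ := by simp only [hτdef]; ring
    have e2 : t - τ₁ y + τ₁ y = t := by ring
    rw [e1] at h1
    rw [e2] at h2
    calc |f (t + τ) - f t| ≤ |f (t + τ) - f (t - τ₁ y)| + |f (t - τ₁ y) - f t| := abs_sub_le _ _ _
      _ < ε := by have hc := abs_sub_comm (f (t - τ₁ y)) (f t); linarith
  · -- g part
    have hsT : t - τ₂ y ∈ T := (hτ₂P y t ht).2
    set s : ℝ := t - τ₂ y with hsdef
    have hpT : s + τ₂ x' ∈ T := (hτ₂P x' s hsT).1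
    have hqT : t + τ ∈ T := (hτP t ht).1
    have g1 : ‖g (s + τ₂ x') - g s‖ < ε/4 := hτ₂ap x' _ hsT
    have g2 : ‖g (s + τ₂ y) - g s‖ < ε/4 := hτ₂ap y _ hsT
    rw [Real.norm_eq_abs] at g1 g2
    have e2 : s + τ₂ y = t := by simp only [hsdef]; ring
    rw [e2] at g2
    have ediff : (t + τ) - (s + τ₂ x') = d x' - d y := by
      simp only [hτdef, hsdef, hddef, hydef]; ring
    have g3 : |g (t + τ) - g (s + τ₂ x')| < ε/2 := by
      apply hδ' _ hqT _ hpT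
      rw [ediff]; exact hη
    calc |g (t + τ) - g t| ≤ |g (t + τ) - g (s + τ₂ x')| + |g (s + τ₂ x') - g t| := abs_sub_le _ _ _
      _ ≤ |g (t + τ) - g (s + τ₂ x')| + (|g (s + τ₂ x') - g s| + |g s - g t|) := by
          linarith [abs_sub_le (g (s + τ₂ x')) (g s) (g t)]
      _ < ε := by have hc := abs_sub_comm (g s) (g t); linarith

end AuxPAP2
section AuxPAP3

open MeasureTheory Filter Set

variable {T : Set ℝ}

lemma ap_add (hTc : IsClosed T) {f g : ℝ → ℝ} (hf : APfun T f) (hg : APfun T g) :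
    APfun T (fun t => f t + g t) := by
  refine ⟨hf.1.add hg.1, fun ε hε => ?_⟩
  obtain ⟨L, hL, h⟩ := common_ap hTc hf hg (ε/2) (by positivity)
  refine ⟨L, hL, fun x => ?_⟩
  obtain ⟨τ, hτP, hτI, hτap⟩ := h x
  refine ⟨τ, hτP, hτI, fun t ht => ?_⟩
  obtain ⟨h1, h2⟩ := hτap t ht
  have e : f (t + τ) + g (t + τ) - (f t + g t) = (f (t + τ) - f t) + (g (t + τ) - g t) := by ring
  rw [Real.norm_eq_abs]
  calc |f (t + τ) + g (t + τ) - (f t + g t)| ≤ |f (t + τ) - f t| + |g (t + τ) - g t| := by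
        rw [e]; exact abs_add_le _ _
    _ < ε := by linarith

lemma ap_mul (hTc : IsClosed T) {f g : ℝ → ℝ} (hf : APfun T f) (hg : APfun T g) :
    APfun T (fun t => f t * g t) := by
  refine ⟨hf.1.mul hg.1, fun ε hε => ?_⟩
  obtain ⟨Cf, hCf⟩ := (bc_of_ap hTc hf).2
  obtain ⟨Cg, hCg⟩ := (bc_of_ap hTc hg).2
  set Cf' : ℝ := max Cf 1 with hCf'
  set Cg' : ℝ := max Cg 1 with hCg'
  have hCf'p : (0:ℝ) < Cf' := lt_of_lt_of_le one_pos (le_max_right _ _)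
  have hCg'p : (0:ℝ) < Cg' := lt_of_lt_of_le one_pos (le_max_right _ _)
  set ε' : ℝ := ε / (Cf' + Cg') with hε'
  have hε'p : 0 < ε' := by positivity
  obtain ⟨L, hL, h⟩ := common_ap hTc hf hg ε' hε'p
  refine ⟨L, hL, fun x => ?_⟩
  obtain ⟨τ, hτP, hτI, hτap⟩ := h x
  refine ⟨τ, hτP, hτI, fun t ht => ?_⟩
  obtain ⟨h1, h2⟩ := hτap t ht
  have htτ : t + τ ∈ T := (hτP t ht).1
  have hbf : |f (t + τ)| ≤ Cf' := le_trans (by rw [← Real.norm_eq_abs]; exact hCf _ htτ) (le_max_left _ _)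
  have hbg : |g t| ≤ Cg' := le_trans (by rw [← Real.norm_eq_abs]; exact hCg _ ht) (le_max_left _ _)
  have e : f (t + τ) * g (t + τ) - f t * g t
      = f (t + τ) * (g (t + τ) - g t) + g t * (f (t + τ) - f t) := by ring
  have key : |f (t + τ) * g (t + τ) - f t * g t|
      ≤ |f (t + τ)| * |g (t + τ) - g t| + |g t| * |f (t + τ) - f t| := by
    rw [e]
    exact le_trans (abs_add_le _ _) (by rw [abs_mul, abs_mul])
  have e1 : |f (t + τ)| * |g (t + τ) - g t| < Cf' * ε' := by
    calc |f (t + τ)| * |g (t + τ) - g t| ≤ Cf' * |g (t + τ) - g t| := by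
          exact mul_le_mul_of_nonneg_right hbf (abs_nonneg _)
      _ < Cf' * ε' := by exact (mul_lt_mul_iff_right₀ hCf'p).mpr h2
  have e2 : |g t| * |f (t + τ) - f t| < Cg' * ε' := by
    calc |g t| * |f (t + τ) - f t| ≤ Cg' * |f (t + τ) - f t| := by
          exact mul_le_mul_of_nonneg_right hbg (abs_nonneg _)
      _ < Cg' * ε' := by exact (mul_lt_mul_iff_right₀ hCg'p).mpr h1
  have efin : Cf' * ε' + Cg' * ε' = ε := by
    have : Cf' + Cg' ≠ 0 := by positivity
    field_simp [hε']
    rw [hε', div_mul_cancel₀ _ this]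
  rw [Real.norm_eq_abs]
  calc |f (t + τ) * g (t + τ) - f t * g t|
      ≤ |f (t + τ)| * |g (t + τ) - g t| + |g t| * |f (t + τ) - f t| := key
    _ < Cf' * ε' + Cg' * ε' := by linarith
    _ = ε := efin

lemma bc_add {f g : ℝ → ℝ} (hf : BCfun T f) (hg : BCfun T g) :
    BCfun T (fun t => f t + g t) := by
  obtain ⟨Cf, hCf⟩ := hf.2
  obtain ⟨Cg, hCg⟩ := hg.2
  exact ⟨hf.1.add hg.1, Cf + Cg, fun t ht =>
    le_trans (norm_add_le _ _) (add_le_add (hCf t ht) (hCg t ht))⟩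

lemma bc_mul {f g : ℝ → ℝ} (hf : BCfun T f) (hg : BCfun T g) :
    BCfun T (fun t => f t * g t) := by
  obtain ⟨Cf, hCf⟩ := hf.2
  obtain ⟨Cg, hCg⟩ := hg.2
  refine ⟨hf.1.mul hg.1, (max Cf 0) * (max Cg 0), fun t ht => ?_⟩
  have h1 : ‖f t‖ ≤ max Cf 0 := le_trans (hCf t ht) (le_max_left _ _)
  have h2 : ‖g t‖ ≤ max Cg 0 := le_trans (hCg t ht) (le_max_left _ _)
  calc ‖f t * g t‖ = ‖f t‖ * ‖g t‖ := norm_mul _ _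
    _ ≤ (max Cf 0) * (max Cg 0) := mul_le_mul h1 h2 (norm_nonneg _) (le_max_right _ _)

end AuxPAP3
section AuxPAP4

open MeasureTheory Filter Set

variable {T : Set ℝ}

lemma measurableSet_Qr (hTc : IsClosed T) (r : ℝ) : MeasurableSet (Qr T r) :=
  measurableSet_Icc.inter hTc.measurableSet

lemma integrableOn_u_Qr {u : ℝ → ℝ} (hu : UInfty T u) (r : ℝ) :
    IntegrableOn u (Qr T r) (deltaMeasure T) :=
  hu.2.2.1 (Icc (tsT0 T - r) (tsT0 T + r)) (Metric.isBounded_Icc _ _)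

lemma integrableOn_weighted (hTc : IsClosed T) {u φ : ℝ → ℝ} (hu : UInfty T u)
    (hφc : ContinuousOn φ T) {C : ℝ} (hφb : ∀ t ∈ T, ‖φ t‖ ≤ C) (r : ℝ) :
    IntegrableOn (fun t => ‖φ t‖ * u t) (Qr T r) (deltaMeasure T) := by
  have hQm : MeasurableSet (Qr T r) := measurableSet_Qr hTc r
  have hQsub : Qr T r ⊆ T := inter_subset_right
  have hint : IntegrableOn u (Qr T r) (deltaMeasure T) := integrableOn_u_Qr hu r
  have hCint : IntegrableOn (fun t => (max C 0) * u t) (Qr T r) (deltaMeasure T) :=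
    hint.const_mul _
  refine hCint.mono' ?_ ?_
  · exact (((hφc.mono hQsub).norm).aestronglyMeasurable hQm).mul
      (hu.1.aestronglyMeasurable)
  · rw [ae_restrict_iff' hQm]
    refine ae_of_all _ fun t ht => ?_
    have hup : 0 < u t := hu.2.1 t (hQsub ht)
    have h1 : ‖‖φ t‖ * u t‖ = ‖φ t‖ * u t := by
      rw [Real.norm_eq_abs, abs_of_nonneg (mul_nonneg (norm_nonneg _) hup.le)]
    rw [h1]
    exact mul_le_mul_of_nonneg_right (le_trans (hφb t (hQsub ht)) (le_max_left _ _)) hup.le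

lemma pap0_zero (hTc : IsClosed T) {u : ℝ → ℝ} (hu : UInfty T u) :
    PAP0fun T u (fun _ : ℝ => (0:ℝ)) := by
  refine ⟨⟨continuousOn_const, 0, fun t _ => by simp⟩, ?_⟩
  simp only [norm_zero, zero_mul, integral_zero, mul_zero]
  exact tendsto_const_nhds

lemma pap0_dominated (hTc : IsClosed T) {u : ℝ → ℝ} (hu : UInfty T u)
    {φ ψ₁ ψ₂ : ℝ → ℝ} (hφ : BCfun T φ) (h₁ : PAP0fun T u ψ₁) (h₂ : PAP0fun T u ψ₂)
    {C : ℝ} (hC : 0 ≤ C) (hle : ∀ t ∈ T, ‖φ t‖ ≤ C * (‖ψ₁ t‖ + ‖ψ₂ t‖)) :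
    PAP0fun T u φ := by
  refine ⟨hφ, ?_⟩
  have hQm : ∀ r, MeasurableSet (Qr T r) := measurableSet_Qr hTc
  have hQsub : ∀ r : ℝ, Qr T r ⊆ T := fun r => inter_subset_right
  obtain ⟨C₁, hC₁⟩ := h₁.1.2
  obtain ⟨C₂, hC₂⟩ := h₂.1.2
  obtain ⟨Cφ, hCφ⟩ := hφ.2
  have intφ := fun r => integrableOn_weighted hTc hu hφ.1 hCφ r
  have int₁ := fun r => integrableOn_weighted hTc hu h₁.1.1 hC₁ r
  have int₂ := fun r => integrableOn_weighted hTc hu h₂.1.1 hC₂ r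
  have hev : ∀ᶠ r in alongPi T, 0 < uQ T u r :=
    hu.2.2.2.2.eventually (eventually_gt_atTop 0)
  have hnn : ∀ᶠ r in alongPi T,
      0 ≤ (uQ T u r)⁻¹ * ∫ t in Qr T r, ‖φ t‖ * u t ∂(deltaMeasure T) := by
    filter_upwards [hev] with r hr
    refine mul_nonneg (inv_nonneg.mpr hr.le) ?_
    refine setIntegral_nonneg (hQm r) fun t ht => ?_
    exact mul_nonneg (norm_nonneg _) (hu.2.1 t (hQsub r ht)).le
  have hub : ∀ᶠ r in alongPi T,
      (uQ T u r)⁻¹ * ∫ t in Qr T r, ‖φ t‖ * u t ∂(deltaMeasure T)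
      ≤ C * ((uQ T u r)⁻¹ * ∫ t in Qr T r, ‖ψ₁ t‖ * u t ∂(deltaMeasure T))
        + C * ((uQ T u r)⁻¹ * ∫ t in Qr T r, ‖ψ₂ t‖ * u t ∂(deltaMeasure T)) := by
    filter_upwards [hev] with r hr
    have hkey : ∫ t in Qr T r, ‖φ t‖ * u t ∂(deltaMeasure T)
        ≤ C * ∫ t in Qr T r, ‖ψ₁ t‖ * u t ∂(deltaMeasure T)
          + C * ∫ t in Qr T r, ‖ψ₂ t‖ * u t ∂(deltaMeasure T) := by
      have step : ∫ t in Qr T r, ‖φ t‖ * u t ∂(deltaMeasure T)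
          ≤ ∫ t in Qr T r, (C * (‖ψ₁ t‖ * u t) + C * (‖ψ₂ t‖ * u t)) ∂(deltaMeasure T) := by
        refine setIntegral_mono_on (intφ r) (((int₁ r).const_mul C).add ((int₂ r).const_mul C))
          (hQm r) fun t ht => ?_
        have hup : 0 ≤ u t := (hu.2.1 t (hQsub r ht)).le
        have := mul_le_mul_of_nonneg_right (hle t (hQsub r ht)) hup
        calc ‖φ t‖ * u t ≤ C * (‖ψ₁ t‖ + ‖ψ₂ t‖) * u t := this
          _ = C * (‖ψ₁ t‖ * u t) + C * (‖ψ₂ t‖ * u t) := by ring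
      rw [integral_add ((int₁ r).const_mul C) ((int₂ r).const_mul C),
        integral_const_mul, integral_const_mul] at step
      exact step
    have hinv : (0:ℝ) ≤ (uQ T u r)⁻¹ := inv_nonneg.mpr hr.le
    calc (uQ T u r)⁻¹ * ∫ t in Qr T r, ‖φ t‖ * u t ∂(deltaMeasure T)
        ≤ (uQ T u r)⁻¹ * (C * ∫ t in Qr T r, ‖ψ₁ t‖ * u t ∂(deltaMeasure T)
            + C * ∫ t in Qr T r, ‖ψ₂ t‖ * u t ∂(deltaMeasure T)) :=
          mul_le_mul_of_nonneg_left hkey hinv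
      _ = C * ((uQ T u r)⁻¹ * ∫ t in Qr T r, ‖ψ₁ t‖ * u t ∂(deltaMeasure T))
          + C * ((uQ T u r)⁻¹ * ∫ t in Qr T r, ‖ψ₂ t‖ * u t ∂(deltaMeasure T)) := by ring
  have hlim : Tendsto (fun r =>
      C * ((uQ T u r)⁻¹ * ∫ t in Qr T r, ‖ψ₁ t‖ * u t ∂(deltaMeasure T))
      + C * ((uQ T u r)⁻¹ * ∫ t in Qr T r, ‖ψ₂ t‖ * u t ∂(deltaMeasure T)))
      (alongPi T) (nhds 0) := by
    have := (h₁.2.const_mul C).add (h₂.2.const_mul C)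
    simpa using this
  exact squeeze_zero' hnn hub hlim

lemma pap0_add (hTc : IsClosed T) {u : ℝ → ℝ} (hu : UInfty T u)
    {h₁ h₂ : ℝ → ℝ} (hh₁ : PAP0fun T u h₁) (hh₂ : PAP0fun T u h₂) :
    PAP0fun T u (fun t => h₁ t + h₂ t) := by
  refine pap0_dominated hTc hu (bc_add hh₁.1 hh₂.1) hh₁ hh₂ (C := 1) one_pos.le
    fun t ht => ?_
  rw [one_mul]
  exact norm_add_le _ _

lemma pap0_mul_bc (hTc : IsClosed T) {u : ℝ → ℝ} (hu : UInfty T u)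
    {h b : ℝ → ℝ} (hh : PAP0fun T u h) (hb : BCfun T b) :
    PAP0fun T u (fun t => h t * b t) := by
  obtain ⟨Cb, hCb⟩ := hb.2
  refine pap0_dominated hTc hu (bc_mul hh.1 hb) hh (pap0_zero hTc hu)
    (C := max Cb 0) (le_max_right _ _) fun t ht => ?_
  simp only [norm_zero, add_zero]
  calc ‖h t * b t‖ = ‖h t‖ * ‖b t‖ := norm_mul _ _
    _ ≤ ‖h t‖ * max Cb 0 := mul_le_mul_of_nonneg_left
        (le_trans (hCb t ht) (le_max_left _ _)) (norm_nonneg _)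
    _ = max Cb 0 * ‖h t‖ := mul_comm _ _

end AuxPAP4
/-- Algebraic properties of `PAP(T,ℝ,u)` for `u ∈ U_∞^Inv`: it is closed under sums and
pointwise products, and products of a `PAP` function with an `AP` function stay in `PAP`. -/
theorem pap_add_mul (T : Set ℝ) (hT : APTimeScale T)
    (u : ℝ → ℝ) (hu : UInftyInv T u) (f g : ℝ → ℝ) :
    (PAPfun T u f → PAPfun T u g →
      PAPfun T u (fun t => f t + g t) ∧ PAPfun T u (fun t => f t * g t)) ∧
    (PAPfun T u f → APfun T g → PAPfun T u (fun t => f t * g t)) := by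
  have hTc : IsClosed T := hT.2.1
  have hu' : UInfty T u := hu.1
  constructor
  · rintro ⟨g₁, h₁, hg₁, hh₁, heq₁⟩ ⟨g₂, h₂, hg₂, hh₂, heq₂⟩
    constructor
    · exact ⟨fun t => g₁ t + g₂ t, fun t => h₁ t + h₂ t, ap_add hTc hg₁ hg₂,
        pap0_add hTc hu' hh₁ hh₂,
        fun t ht => by dsimp only; rw [heq₁ t ht, heq₂ t ht]; ring⟩
    · refine ⟨fun t => g₁ t * g₂ t,
        fun t => g₁ t * h₂ t + (h₁ t * g₂ t + h₁ t * h₂ t),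
        ap_mul hTc hg₁ hg₂, ?_, fun t ht => by dsimp only; rw [heq₁ t ht, heq₂ t ht]; ring⟩
      have p1 : PAP0fun T u (fun t => g₁ t * h₂ t) := by
        have : (fun t => g₁ t * h₂ t) = fun t => h₂ t * g₁ t := funext fun t => mul_comm _ _
        rw [this]
        exact pap0_mul_bc hTc hu' hh₂ (bc_of_ap hTc hg₁)
      have p2 : PAP0fun T u (fun t => h₁ t * g₂ t) :=
        pap0_mul_bc hTc hu' hh₁ (bc_of_ap hTc hg₂)
      have p3 : PAP0fun T u (fun t => h₁ t * h₂ t) :=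
        pap0_mul_bc hTc hu' hh₁ hh₂.1
      exact pap0_add hTc hu' p1 (pap0_add hTc hu' p2 p3)
  · rintro ⟨g₁, h₁, hg₁, hh₁, heq₁⟩ hgAP
    exact ⟨fun t => g₁ t * g t, fun t => h₁ t * g t, ap_mul hTc hg₁ hgAP,
      pap0_mul_bc hTc hu' hh₁ (bc_of_ap hTc hgAP),
      fun t ht => by dsimp only; rw [heq₁ t ht]; ring⟩
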